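/- arXiv:1203.5845 — 5 statements merged into one kernel-verified Lean document; each statement's English description precedes it below -/
import Mathlib

section
/- Let H be a real Hilbert space, let P : H → H be an orthogonal projection and Q = I − P. Let B : H → H be a bounded linear operator with B ∘ Q = Q ∘ B, ‖B‖ ≤ 1, ‖I − B‖ ≤ b, and ‖P ∘ B‖ ≤ κ. Let û, u ∈ H, let d ∈ H satisfy ‖d‖ ≤ M‖û − u‖ and ‖Q d‖ ≤ γ‖û − u‖, and let ξ ∈ H satisfy ‖ξ‖ ≤ ε. Then ‖B d + (I − B)ξ‖ ≤ (κ M + γ)‖û − u‖ + 2 b ε. -/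
/-- One-step error contraction estimate for the filter:
`‖B d + (I − B)ξ‖ ≤ (κM + γ)‖û − u‖ + 2bε`. -/
theorem filter_one_step_error_estimate
    {H : Type*} [NormedAddCommGroup H] [InnerProductSpace ℝ H] [CompleteSpace H]
    (P Q : H →L[ℝ] H) (hPidem : IsIdempotentElem P) (hPsa : IsSelfAdjoint P)
    (hQ : Q = 1 - P)
    (B : H →L[ℝ] H) (hBQ : B ∘L Q = Q ∘L B)
    (b κ : ℝ) (hBnorm : ‖B‖ ≤ 1) (hIB : ‖1 - B‖ ≤ b) (hPB : ‖P ∘L B‖ ≤ κ)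
    (uh u d ξ : H) (M γ ε : ℝ)
    (hd : ‖d‖ ≤ M * ‖uh - u‖) (hQd : ‖Q d‖ ≤ γ * ‖uh - u‖)
    (hξ : ‖ξ‖ ≤ ε) :
    ‖B d + (1 - B) ξ‖ ≤ (κ * M + γ) * ‖uh - u‖ + 2 * b * ε := by
  have hκ : (0:ℝ) ≤ κ := le_trans (norm_nonneg _) hPB
  have hb : (0:ℝ) ≤ b := le_trans (norm_nonneg _) hIB
  have hε : (0:ℝ) ≤ ε := le_trans (norm_nonneg _) hξ
  have hdecomp : B d = P (B d) + Q (B d) := by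
    rw [hQ]; simp
  have hPBd : ‖P (B d)‖ ≤ κ * (M * ‖uh - u‖) := by
    calc ‖P (B d)‖ = ‖(P ∘L B) d‖ := rfl
      _ ≤ ‖P ∘L B‖ * ‖d‖ := (P ∘L B).le_opNorm d
      _ ≤ κ * (M * ‖uh - u‖) := by
          exact mul_le_mul hPB hd (norm_nonneg _) hκ
  have hQBd : ‖Q (B d)‖ ≤ γ * ‖uh - u‖ := by
    have : Q (B d) = B (Q d) := by
      have := congrArg (fun T : H →L[ℝ] H => T d) hBQ
      simpa using this.symm
    rw [this]
    calc ‖B (Q d)‖ ≤ ‖B‖ * ‖Q d‖ := B.le_opNorm _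
      _ ≤ 1 * ‖Q d‖ := by
          exact mul_le_mul_of_nonneg_right hBnorm (norm_nonneg _)
      _ = ‖Q d‖ := one_mul _
      _ ≤ γ * ‖uh - u‖ := hQd
  have hBd : ‖B d‖ ≤ (κ * M + γ) * ‖uh - u‖ := by
    calc ‖B d‖ = ‖P (B d) + Q (B d)‖ := by rw [← hdecomp]
      _ ≤ ‖P (B d)‖ + ‖Q (B d)‖ := norm_add_le _ _
      _ ≤ κ * (M * ‖uh - u‖) + γ * ‖uh - u‖ := add_le_add hPBd hQBd
      _ = (κ * M + γ) * ‖uh - u‖ := by ring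
  have hIBξ : ‖(1 - B) ξ‖ ≤ 2 * b * ε := by
    calc ‖(1 - B) ξ‖ ≤ ‖1 - B‖ * ‖ξ‖ := (1 - B).le_opNorm _
      _ ≤ b * ε := mul_le_mul hIB hξ (norm_nonneg _) hb
      _ ≤ 2 * b * ε := by nlinarith
  calc ‖B d + (1 - B) ξ‖ ≤ ‖B d‖ + ‖(1 - B) ξ‖ := norm_add_le _ _
    _ ≤ (κ * M + γ) * ‖uh - u‖ + 2 * b * ε := add_le_add hBd hIBξ
end

section
/- Let H be a real Hilbert space, P : H → H an orthogonal projection, Q = I − P, and Ψ : H → H a map. Let M ≥ 0, γ ∈ (0,1), κ ≥ 0, b ≥ 0, ε ≥ 0, r > 0, and set R = 2r and a = κM + γ; assume a < 1 and 2bε/(1−a) ≤ r. Let (u_j) satisfy u_{j+1} = Ψ(u_j) and assume that for every j and every v ∈ H with ‖v − u_j‖ ≤ R one has ‖Ψ(v) − Ψ(u_j)‖ ≤ M‖v − u_j‖ and ‖Q(Ψ(v) − Ψ(u_j))‖ ≤ γ‖v − u_j‖. Let (B_j) be bounded linear operators on H with B_j ∘ Q = Q ∘ B_j, ‖B_j‖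 ≤ 1, ‖I − B_j‖ ≤ b, (I − B_j) ∘ Q = 0, and ‖P ∘ B_j‖ ≤ κ for all j. Let (ξ_j) satisfy ξ_j ∈ range(P) and ‖ξ_j‖ ≤ ε, let y_{j+1} = P(Ψ(u_j)) + ξ_{j+1}, and let (û_j) satisfy û_{j+1} = B_j(Ψ(û_j)) + (I − B_j)(y_{j+1}) with ‖û_0 − u_0‖ ≤ r. Then for all j ≥ 0, ‖û_j − u_j‖ ≤ aʲ r + 2bε·∑_{i=0}^{j−1} aⁱ, and consequently limsup_{j→∞} ‖û_j − u_j‖ ≤ 2bε/(1−a). -/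
/-- Filter accuracy theorem for partial observations: under the Lipschitz and
squeezing properties of the model map, variance inflation `‖P ∘ B_j‖ ≤ κ` with
`a = κM + γ < 1`, and noisy observations of the low modes with noise bound `ε`,
the filter error satisfies `‖û_j − u_j‖ ≤ aʲ r + 2bε ∑_{i<j} aⁱ` and hence
`limsup ‖û_j − u_j‖ ≤ 2bε/(1−a)`. -/
theorem filter_accuracy_partial_observations
    {H : Type*} [NormedAddCommGroup H] [InnerProductSpace ℝ H] [CompleteSpace H]
    (P Q : H →L[ℝ] H) (hPidem : IsIdempotentElem P) (hPsa : IsSelfAdjoint P)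
    (hQ : Q = 1 - P)
    (Ψ : H → H) (M γ κ b ε r R a : ℝ)
    (hM : 0 ≤ M) (hγ0 : 0 < γ) (hγ1 : γ < 1) (hκ : 0 ≤ κ) (hb : 0 ≤ b)
    (hε : 0 ≤ ε) (hr : 0 < r) (hR : R = 2 * r) (ha : a = κ * M + γ)
    (ha1 : a < 1) (hsmall : 2 * b * ε / (1 - a) ≤ r)
    (u : ℕ → H) (hu : ∀ j, u (j + 1) = Ψ (u j))
    (hLip : ∀ j, ∀ v : H, ‖v - u j‖ ≤ R → ‖Ψ v - Ψ (u j)‖ ≤ M * ‖v - u j‖)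
    (hSqueeze : ∀ j, ∀ v : H, ‖v - u j‖ ≤ R →
      ‖Q (Ψ v - Ψ (u j))‖ ≤ γ * ‖v - u j‖)
    (B : ℕ → H →L[ℝ] H)
    (hBQ : ∀ j, B j ∘L Q = Q ∘L B j)
    (hBnorm : ∀ j, ‖B j‖ ≤ 1)
    (hIBnorm : ∀ j, ‖1 - B j‖ ≤ b)
    (hIBQ : ∀ j, (1 - B j) ∘L Q = 0)
    (hPB : ∀ j, ‖P ∘L B j‖ ≤ κ)
    (ξ : ℕ → H) (hξP : ∀ j, P (ξ j) = ξ j) (hξ : ∀ j, ‖ξ j‖ ≤ ε)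
    (y : ℕ → H) (hy : ∀ j, y (j + 1) = P (Ψ (u j)) + ξ (j + 1))
    (uh : ℕ → H)
    (huh : ∀ j, uh (j + 1) = (B j) (Ψ (uh j)) + (1 - B j) (y (j + 1)))
    (h0 : ‖uh 0 - u 0‖ ≤ r) :
    (∀ j, ‖uh j - u j‖ ≤ a ^ j * r + 2 * b * ε * ∑ i ∈ Finset.range j, a ^ i) ∧
    Filter.limsup (fun j => ‖uh j - u j‖) Filter.atTop ≤ 2 * b * ε / (1 - a) := by
  have ha0 : 0 < a := by rw [ha]; nlinarith
  have ha1' : 0 < 1 - a := by linarith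
  -- geometric sum bound
  have hsum : ∀ j, (∑ i ∈ Finset.range j, a ^ i) ≤ 1 / (1 - a) := by
    intro j
    rw [le_div_iff₀ ha1']
    nlinarith [pow_nonneg ha0.le j, geom_sum_mul a j]
  -- the bound sequence
  set S : ℕ → ℝ := fun j => a ^ j * r + 2 * b * ε * ∑ i ∈ Finset.range j, a ^ i
    with hS
  have hSR : ∀ j, S j ≤ R := by
    intro j
    have h1 : a ^ j ≤ 1 := pow_le_one₀ ha0.le ha1.le
    have h2 : 2 * b * ε * (∑ i ∈ Finset.range j, a ^ i) ≤ 2 * b * ε / (1 - a) := by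
      have := hsum j
      have hbe : 0 ≤ 2 * b * ε := by positivity
      calc 2 * b * ε * (∑ i ∈ Finset.range j, a ^ i) ≤ 2 * b * ε * (1 / (1 - a)) :=
            mul_le_mul_of_nonneg_left this hbe
        _ = 2 * b * ε / (1 - a) := by ring
    have h3 : a ^ j * r ≤ r := by nlinarith
    show a ^ j * r + 2 * b * ε * ∑ i ∈ Finset.range j, a ^ i ≤ R
    rw [hR]; linarith
  -- one-step error estimate
  have step : ∀ j, ‖uh j - u j‖ ≤ R → ‖uh (j+1) - u (j+1)‖ ≤ a * ‖uh j - u j‖ + b * ε := by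
    intro j hj
    have hd := hLip j (uh j) hj
    have hdQ := hSqueeze j (uh j) hj
    set d := Ψ (uh j) - Ψ (u j) with hdd
    have hBPw : (B j) (P (Ψ (u j))) = (B j) (Ψ (u j)) - Ψ (u j) + P (Ψ (u j)) := by
      have hz : ((1 - B j) ∘L Q) (Ψ (u j)) = 0 := by rw [hIBQ]; simp
      simp only [ContinuousLinearMap.comp_apply, hQ, ContinuousLinearMap.sub_apply,
        ContinuousLinearMap.one_apply, map_sub] at hz
      have := sub_eq_zero.mp hz
      -- hz : (Ψ u j - P Ψ u j) - (B j (Ψ u j) - B j (P (Ψ u j))) = 0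
      linear_combination (norm := abel) hz
    have key : uh (j+1) - u (j+1) = P ((B j) d) + (B j) (Q d) + (1 - B j) (ξ (j+1)) := by
      have hQB : (Q ∘L B j) d = (B j ∘L Q) d := by rw [hBQ]
      simp only [ContinuousLinearMap.comp_apply] at hQB
      have hQd : Q ((B j) d) = (B j) (Q d) := hQB
      rw [huh, hu, hy]
      simp only [ContinuousLinearMap.sub_apply, ContinuousLinearMap.one_apply, map_add]
      rw [hBPw, ← hQd]
      simp only [hQ, ContinuousLinearMap.sub_apply, ContinuousLinearMap.one_apply, hdd,
        map_sub]
      abel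
    rw [key]
    have h1 : ‖P ((B j) d)‖ ≤ κ * ‖d‖ := by
      have := (P ∘L B j).le_opNorm d
      simp only [ContinuousLinearMap.comp_apply] at this
      exact this.trans (mul_le_mul_of_nonneg_right (hPB j) (norm_nonneg d))
    have h2 : ‖(B j) (Q d)‖ ≤ γ * ‖uh j - u j‖ := by
      have h := (B j).le_opNorm (Q d)
      have : ‖(B j) (Q d)‖ ≤ ‖Q d‖ := by
        have := mul_le_mul_of_nonneg_right (hBnorm j) (norm_nonneg (Q d))
        simpa using h.trans this
      exact this.trans hdQ
    have h3 : ‖(1 - B j) (ξ (j+1))‖ ≤ b * ε := by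
      have h := (1 - B j).le_opNorm (ξ (j+1))
      calc ‖(1 - B j) (ξ (j+1))‖ ≤ ‖1 - B j‖ * ‖ξ (j+1)‖ := h
        _ ≤ b * ε := mul_le_mul (hIBnorm j) (hξ (j+1)) (norm_nonneg _) hb
    have h1' : ‖P ((B j) d)‖ ≤ κ * (M * ‖uh j - u j‖) :=
      h1.trans (mul_le_mul_of_nonneg_left hd hκ)
    calc ‖P ((B j) d) + (B j) (Q d) + (1 - B j) (ξ (j+1))‖
        ≤ ‖P ((B j) d) + (B j) (Q d)‖ + ‖(1 - B j) (ξ (j+1))‖ := norm_add_le _ _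
      _ ≤ (‖P ((B j) d)‖ + ‖(B j) (Q d)‖) + ‖(1 - B j) (ξ (j+1))‖ := by
          gcongr; exact norm_add_le _ _
      _ ≤ (κ * (M * ‖uh j - u j‖) + γ * ‖uh j - u j‖) + b * ε := by gcongr
      _ = a * ‖uh j - u j‖ + b * ε := by rw [ha]; ring
  -- main induction
  have main : ∀ j, ‖uh j - u j‖ ≤ S j := by
    intro j
    induction j with
    | zero => simpa [hS] using h0
    | succ j ih =>
      have hjR : ‖uh j - u j‖ ≤ R := ih.trans (hSR j)
      have := step j hjR
      have h2 : a * ‖uh j - u j‖ + b * ε ≤ a * S j + b * ε := by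
        nlinarith [mul_le_mul_of_nonneg_left ih ha0.le]
      have h3 : a * S j + b * ε ≤ S (j + 1) := by
        simp only [hS, geom_sum_succ, pow_succ]
        have : 0 ≤ b * ε := by positivity
        nlinarith
      linarith
  refine ⟨main, ?_⟩
  set C := 2 * b * ε / (1 - a) with hC
  have hbound : ∀ j, ‖uh j - u j‖ ≤ a ^ j * r + C := by
    intro j
    have := main j
    have h2 : 2 * b * ε * (∑ i ∈ Finset.range j, a ^ i) ≤ C := by
      rw [hC]
      have hbe : 0 ≤ 2 * b * ε := by positivity
      calc 2 * b * ε * (∑ i ∈ Finset.range j, a ^ i) ≤ 2 * b * ε * (1 / (1 - a)) :=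
            mul_le_mul_of_nonneg_left (hsum j) hbe
        _ = 2 * b * ε / (1 - a) := by ring
    simp only [hS] at this
    linarith
  have hcob : Filter.IsCoboundedUnder (· ≤ ·) Filter.atTop (fun j => ‖uh j - u j‖) :=
    Filter.isCoboundedUnder_le_of_le Filter.atTop (fun j => norm_nonneg _)
  refine le_of_forall_pos_le_add (fun δ hδ => ?_)
  have htend : Filter.Tendsto (fun j : ℕ => a ^ j * r) Filter.atTop (nhds 0) := by
    have := tendsto_pow_atTop_nhds_zero_of_lt_one ha0.le ha1
    simpa using this.mul_const r
  have hev : ∀ᶠ j in Filter.atTop, (fun j => ‖uh j - u j‖) j ≤ C + δ := by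
    filter_upwards [htend.eventually (gt_mem_nhds hδ)] with j hj
    have := hbound j
    linarith
  exact Filter.limsup_le_of_le hcob hev
end

section
/- Let H be a real Hilbert space, P : H → H an orthogonal projection, Q = I − P, and Ψ : H → H a map satisfying, for all u, v ∈ H, ‖Ψ(u) − Ψ(v)‖ ≤ M‖u − v‖ and ‖Q(Ψ(u) − Ψ(v))‖ ≤ γ‖u − v‖, where M ≥ 0 and γ ∈ (0,1). Let (B_j) be bounded linear operators on H with B_j ∘ Q = Q ∘ B_j, ‖B_j‖ ≤ 1, and ‖P ∘ B_j‖ ≤ κ for all j, and set a = κM + γ; assume a < 1. Let (y_j) be any sequence in H and let (û_j) and (ŵ_j) satisfy û_{j+1} = B_j(Ψ(û_j)) + (I − B_j)(y_{j+1}) and ŵ_{j+1} = B_j(Ψ(ŵ_j)) + (I − B_j)(y_{j+1}). Then for all j ≥ 0, ‖û_j − ŵ_j‖ ≤ aʲ ‖û_0 − ŵ_0‖. -/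
/-- Filter stability theorem: two filters driven by the same data converge
geometrically to each other: `‖û_j − ŵ_j‖ ≤ aʲ ‖û_0 − ŵ_0‖` with `a = κM + γ`. -/
theorem filter_stability
    {H : Type*} [NormedAddCommGroup H] [InnerProductSpace ℝ H] [CompleteSpace H]
    (P Q : H →L[ℝ] H) (hPidem : IsIdempotentElem P) (hPsa : IsSelfAdjoint P)
    (hQ : Q = 1 - P)
    (Ψ : H → H) (M γ κ a : ℝ) (hM : 0 ≤ M) (hγ0 : 0 < γ) (hγ1 : γ < 1)
    (hLip : ∀ u v : H, ‖Ψ u - Ψ v‖ ≤ M * ‖u - v‖)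
    (hSqueeze : ∀ u v : H, ‖Q (Ψ u - Ψ v)‖ ≤ γ * ‖u - v‖)
    (B : ℕ → H →L[ℝ] H)
    (hBQ : ∀ j, B j ∘L Q = Q ∘L B j)
    (hBnorm : ∀ j, ‖B j‖ ≤ 1)
    (hPB : ∀ j, ‖P ∘L B j‖ ≤ κ)
    (ha : a = κ * M + γ) (ha1 : a < 1)
    (y : ℕ → H)
    (uh wh : ℕ → H)
    (huh : ∀ j, uh (j + 1) = (B j) (Ψ (uh j)) + (1 - B j) (y (j + 1)))
    (hwh : ∀ j, wh (j + 1) = (B j) (Ψ (wh j)) + (1 - B j) (y (j + 1))) :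
    ∀ j, ‖uh j - wh j‖ ≤ a ^ j * ‖uh 0 - wh 0‖ := by
  have hκ : 0 ≤ κ := le_trans (norm_nonneg _) (hPB 0)
  have ha0 : 0 ≤ a := by rw [ha]; positivity
  intro j
  induction j with
  | zero => simp
  | succ j ih =>
      set d := uh j - wh j with hd
      set e := Ψ (uh j) - Ψ (wh j) with he
      have hdiff : uh (j + 1) - wh (j + 1) = B j e := by
        rw [huh j, hwh j, he]
        simp [map_sub]
      have hPe : ‖P (B j e)‖ ≤ κ * M * ‖d‖ := by
        calc ‖P (B j e)‖ = ‖(P ∘L B j) e‖ := rfl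
          _ ≤ ‖P ∘L B j‖ * ‖e‖ := (P ∘L B j).le_opNorm e
          _ ≤ κ * (M * ‖d‖) :=
            mul_le_mul (hPB j) (hLip _ _) (norm_nonneg _) hκ
          _ = κ * M * ‖d‖ := by ring
      have hQe : ‖Q (B j e)‖ ≤ γ * ‖d‖ := by
        have : Q (B j e) = B j (Q e) := by
          have := congrArg (fun T : H →L[ℝ] H => T e) (hBQ j)
          simpa using this.symm
        rw [this]
        calc ‖B j (Q e)‖ ≤ ‖B j‖ * ‖Q e‖ := (B j).le_opNorm _
          _ ≤ 1 * (γ * ‖d‖) :=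
            mul_le_mul (hBnorm j) (hSqueeze _ _) (norm_nonneg _) zero_le_one
          _ = γ * ‖d‖ := one_mul _
      have hsplit : B j e = P (B j e) + Q (B j e) := by
        rw [hQ]; simp
      have hstep : ‖uh (j + 1) - wh (j + 1)‖ ≤ a * ‖d‖ := by
        rw [hdiff, hsplit]
        calc ‖P (B j e) + Q (B j e)‖ ≤ ‖P (B j e)‖ + ‖Q (B j e)‖ := norm_add_le _ _
          _ ≤ κ * M * ‖d‖ + γ * ‖d‖ := add_le_add hPe hQe
          _ = a * ‖d‖ := by rw [ha]; ring
      calc ‖uh (j + 1) - wh (j + 1)‖ ≤ a * ‖d‖ := hstep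
        _ ≤ a * (a ^ j * ‖uh 0 - wh 0‖) := by
            exact mul_le_mul_of_nonneg_left ih ha0
        _ = a ^ (j + 1) * ‖uh 0 - wh 0‖ := by ring
end

section
/- Let H be a real Hilbert space, P : H → H an orthogonal projection, Q = I − P, and Ψ : H → H a map. Let M ≥ 0, γ ∈ (0,1), κ ≥ 0, b ≥ 0, ε ≥ 0, r > 0, and set R = 2r and a = κM + γ; assume a < 1 and 2bε/(1−a) ≤ r. Let (u_j) satisfy u_{j+1} = Ψ(u_j) and assume that for every j and every v ∈ H with ‖v − u_j‖ ≤ R one has ‖Ψ(v) − Ψ(u_j)‖ ≤ M‖v − u_j‖ and ‖Q(Ψ(v) − Ψ(u_j))‖ ≤ γ‖v − u_j‖. Let (B_j) be bounded linear operators on H with B_j ∘ Q = Q ∘ B_j, ‖B_j‖ ≤ 1, ‖I − B_j‖ ≤ b, and ‖P ∘ B_j‖ ≤ κ for all j. Let (ξ_j) be a sequence in H with ‖ξ_j‖ ≤ ε, let y_{j+1} = Ψ(u_j) + ξ_{j+1}, and let (û_j) satisfy û_{j+1} = B_j(Ψ(û_j)) + (I − B_j)(y_{j+1}) with ‖û_0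 − u_0‖ ≤ r. Then for all j ≥ 0, ‖û_j − u_j‖ ≤ aʲ r + 2bε·∑_{i=0}^{j−1} aⁱ, and consequently limsup_{j→∞} ‖û_j − u_j‖ ≤ 2bε/(1−a). -/
/-- Filter accuracy theorem for complete observations: with noisy observations
of the complete state and `a = κM + γ < 1`, the filter error satisfies
`‖û_j − u_j‖ ≤ aʲ r + 2bε ∑_{i<j} aⁱ` and hence
`limsup ‖û_j − u_j‖ ≤ 2bε/(1−a)`. -/
theorem filter_accuracy_complete_observations
    {H : Type*} [NormedAddCommGroup H] [InnerProductSpace ℝ H] [CompleteSpace H]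
    (P Q : H →L[ℝ] H) (hPidem : IsIdempotentElem P) (hPsa : IsSelfAdjoint P)
    (hQ : Q = 1 - P)
    (Ψ : H → H) (M γ κ b ε r R a : ℝ)
    (hM : 0 ≤ M) (hγ0 : 0 < γ) (hγ1 : γ < 1) (hκ : 0 ≤ κ) (hb : 0 ≤ b)
    (hε : 0 ≤ ε) (hr : 0 < r) (hR : R = 2 * r) (ha : a = κ * M + γ)
    (ha1 : a < 1) (hsmall : 2 * b * ε / (1 - a) ≤ r)
    (u : ℕ → H) (hu : ∀ j, u (j + 1) = Ψ (u j))
    (hLip : ∀ j, ∀ v : H, ‖v - u j‖ ≤ R → ‖Ψ v - Ψ (u j)‖ ≤ M * ‖v - u j‖)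
    (hSqueeze : ∀ j, ∀ v : H, ‖v - u j‖ ≤ R →
      ‖Q (Ψ v - Ψ (u j))‖ ≤ γ * ‖v - u j‖)
    (B : ℕ → H →L[ℝ] H)
    (hBQ : ∀ j, B j ∘L Q = Q ∘L B j)
    (hBnorm : ∀ j, ‖B j‖ ≤ 1)
    (hIBnorm : ∀ j, ‖1 - B j‖ ≤ b)
    (hPB : ∀ j, ‖P ∘L B j‖ ≤ κ)
    (ξ : ℕ → H) (hξ : ∀ j, ‖ξ j‖ ≤ ε)
    (y : ℕ → H) (hy : ∀ j, y (j + 1) = Ψ (u j) + ξ (j + 1))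
    (uh : ℕ → H)
    (huh : ∀ j, uh (j + 1) = (B j) (Ψ (uh j)) + (1 - B j) (y (j + 1)))
    (h0 : ‖uh 0 - u 0‖ ≤ r) :
    (∀ j, ‖uh j - u j‖ ≤ a ^ j * r + 2 * b * ε * ∑ i ∈ Finset.range j, a ^ i) ∧
    Filter.limsup (fun j => ‖uh j - u j‖) Filter.atTop ≤ 2 * b * ε / (1 - a) := by

  -- Basic positivity facts
  have ha0 : 0 < a := ha ▸ add_pos_of_nonneg_of_pos (mul_nonneg hκ hM) hγ0
  have h1a : 0 < 1 - a := by linarith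
  have hbε : 0 ≤ 2 * b * ε := by positivity
  have hS : ∀ n : ℕ, ∑ i ∈ Finset.range n, a ^ i ≤ 1 / (1 - a) := fun n => by
    simpa using geom_sum_Ico_le_of_lt_one ha0.le ha1 (m := 0) (n := n)
  -- the bound is at most 2r = R
  have hbnd : ∀ j : ℕ, a ^ j * r + 2 * b * ε * ∑ i ∈ Finset.range j, a ^ i ≤ R := by
    intro j
    have h1 : a ^ j * r ≤ r := by
      have : a ^ j ≤ 1 := pow_le_one₀ ha0.le ha1.le
      nlinarith
    have h2 : 2 * b * ε * ∑ i ∈ Finset.range j, a ^ i ≤ r := by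
      calc 2 * b * ε * ∑ i ∈ Finset.range j, a ^ i
          ≤ 2 * b * ε * (1 / (1 - a)) := by
            exact mul_le_mul_of_nonneg_left (hS j) hbε
        _ = 2 * b * ε / (1 - a) := by ring
        _ ≤ r := hsmall
    linarith [hR ▸ (by linarith : a ^ j * r + 2 * b * ε * ∑ i ∈ Finset.range j, a ^ i ≤ 2 * r)]
  -- main induction
  have main : ∀ j, ‖uh j - u j‖ ≤ a ^ j * r + 2 * b * ε * ∑ i ∈ Finset.range j, a ^ i := by
    intro j
    induction j with
    | zero => simpa using h0
    | succ j ih =>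
      have hejR : ‖uh j - u j‖ ≤ R := ih.trans (hbnd j)
      -- error recursion
      have herr : uh (j + 1) - u (j + 1)
          = (B j) (Ψ (uh j) - Ψ (u j)) + (1 - B j) (ξ (j + 1)) := by
        rw [huh j, hy j, hu j, map_add, map_sub]
        simp only [ContinuousLinearMap.sub_apply, ContinuousLinearMap.one_apply]
        abel
      have hw : ‖Ψ (uh j) - Ψ (u j)‖ ≤ M * ‖uh j - u j‖ := hLip j (uh j) hejR
      have hQw : ‖Q (Ψ (uh j) - Ψ (u j))‖ ≤ γ * ‖uh j - u j‖ := hSqueeze j (uh j) hejR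
      set w := Ψ (uh j) - Ψ (u j) with hwdef
      have hBw : ‖(B j) w‖ ≤ a * ‖uh j - u j‖ := by
        have hsplit : (B j) w = P ((B j) w) + (B j) (Q w) := by
          have : Q ((B j) w) = (B j) (Q w) := by
            have := congrArg (fun T : H →L[ℝ] H => T w) (hBQ j)
            simpa using this.symm
          rw [← this, hQ]
          simp [ContinuousLinearMap.sub_apply]
        have h1 : ‖P ((B j) w)‖ ≤ κ * ‖w‖ := by
          calc ‖P ((B j) w)‖ = ‖(P ∘L B j) w‖ := rfl
            _ ≤ ‖P ∘L B j‖ * ‖w‖ := (P ∘L B j).le_opNorm w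
            _ ≤ κ * ‖w‖ := mul_le_mul_of_nonneg_right (hPB j) (norm_nonneg w)
        have h2 : ‖(B j) (Q w)‖ ≤ γ * ‖uh j - u j‖ := by
          calc ‖(B j) (Q w)‖ ≤ ‖B j‖ * ‖Q w‖ := (B j).le_opNorm _
            _ ≤ 1 * ‖Q w‖ := mul_le_mul_of_nonneg_right (hBnorm j) (norm_nonneg _)
            _ = ‖Q w‖ := one_mul _
            _ ≤ γ * ‖uh j - u j‖ := hQw
        have h3 : κ * ‖w‖ ≤ κ * (M * ‖uh j - u j‖) := mul_le_mul_of_nonneg_left hw hκ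
        have htri : ‖(B j) w‖ ≤ ‖P ((B j) w)‖ + ‖(B j) (Q w)‖ := by
          have h := norm_add_le (P ((B j) w)) ((B j) (Q w))
          rw [← hsplit] at h; exact h
        calc ‖(B j) w‖ ≤ ‖P ((B j) w)‖ + ‖(B j) (Q w)‖ := htri
          _ ≤ κ * (M * ‖uh j - u j‖) + γ * ‖uh j - u j‖ := by linarith
          _ = a * ‖uh j - u j‖ := by rw [ha]; ring
      have hnoise : ‖(1 - B j) (ξ (j + 1))‖ ≤ b * ε := by
        calc ‖(1 - B j) (ξ (j + 1))‖ ≤ ‖1 - B j‖ * ‖ξ (j + 1)‖ := (1 - B j).le_opNorm _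
          _ ≤ b * ε := mul_le_mul (hIBnorm j) (hξ (j + 1)) (norm_nonneg _) hb
      have step : ‖uh (j + 1) - u (j + 1)‖ ≤ a * ‖uh j - u j‖ + b * ε := by
        calc ‖uh (j + 1) - u (j + 1)‖ = ‖(B j) w + (1 - B j) (ξ (j + 1))‖ := by rw [herr]
          _ ≤ ‖(B j) w‖ + ‖(1 - B j) (ξ (j + 1))‖ := norm_add_le _ _
          _ ≤ a * ‖uh j - u j‖ + b * ε := add_le_add hBw hnoise
      have hrec : a * ‖uh j - u j‖ + b * ε
          ≤ a ^ (j + 1) * r + 2 * b * ε * ∑ i ∈ Finset.range (j + 1), a ^ i := by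
        have h4 : a * ‖uh j - u j‖
            ≤ a * (a ^ j * r + 2 * b * ε * ∑ i ∈ Finset.range j, a ^ i) :=
          mul_le_mul_of_nonneg_left ih ha0.le
        have h5 : ∑ i ∈ Finset.range (j + 1), a ^ i
            = a * ∑ i ∈ Finset.range j, a ^ i + 1 := geom_sum_succ
        have h6 : b * ε ≤ 2 * b * ε := by nlinarith [mul_nonneg hb hε]
        calc a * ‖uh j - u j‖ + b * ε
            ≤ a * (a ^ j * r + 2 * b * ε * ∑ i ∈ Finset.range j, a ^ i) + 2 * b * ε := by
              linarith
          _ = a ^ (j + 1) * r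
              + 2 * b * ε * (a * ∑ i ∈ Finset.range j, a ^ i + 1) := by
              rw [pow_succ]; ring
          _ = a ^ (j + 1) * r + 2 * b * ε * ∑ i ∈ Finset.range (j + 1), a ^ i := by
              rw [h5]
      exact step.trans hrec
  refine ⟨main, ?_⟩
  -- limsup bound
  set L := 2 * b * ε / (1 - a) with hL
  have hle : ∀ j : ℕ, ‖uh j - u j‖ ≤ a ^ j * r + L := by
    intro j
    refine (main j).trans (add_le_add le_rfl ?_)
    calc 2 * b * ε * ∑ i ∈ Finset.range j, a ^ i
        ≤ 2 * b * ε * (1 / (1 - a)) := mul_le_mul_of_nonneg_left (hS j) hbε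
      _ = L := by rw [hL]; ring
  have htend : Filter.Tendsto (fun j : ℕ => a ^ j * r + L) Filter.atTop (nhds (0 * r + L)) := by
    exact (((tendsto_pow_atTop_nhds_zero_of_abs_lt_one
      (by rw [abs_of_nonneg ha0.le]; exact ha1)).mul_const r).add tendsto_const_nhds)
  have htend' : Filter.Tendsto (fun j : ℕ => a ^ j * r + L) Filter.atTop (nhds L) := by
    simpa using htend
  calc Filter.limsup (fun j => ‖uh j - u j‖) Filter.atTop
      ≤ Filter.limsup (fun j : ℕ => a ^ j * r + L) Filter.atTop := by
        refine Filter.limsup_le_limsup (Filter.Eventually.of_forall hle) ?_ ?_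
        · exact (Filter.isBoundedUnder_of (r := (· ≥ ·)) (f := (Filter.atTop : Filter ℕ))
            (u := fun j : ℕ => ‖uh j - u j‖)
            ⟨0, fun j => norm_nonneg _⟩).isCoboundedUnder_le
        · exact htend'.isBoundedUnder_le
    _ = L := htend'.limsup_eq
end

section
/- Let H be a real Hilbert space, Ψ : H → H a map satisfying ‖Ψ(u) − Ψ(v)‖ ≤ M‖u − v‖ for all u, v ∈ H, and let (B_j) be bounded linear operators on H with ‖B_j‖ ≤ θ and ‖I − B_j‖ ≤ b for all j, where θM < 1. Let (u_j) satisfy u_{j+1} = Ψ(u_j), let (ξ_j) be a sequence in H with ‖ξ_j‖ ≤ ε, let y_{j+1} = Ψ(u_j) + ξ_{j+1}, and let (û_j) satisfy û_{j+1} = B_j(Ψ(û_j)) + (I − B_j)(y_{j+1}). Then for all j ≥ 0, ‖û_j − u_j‖ ≤ (θM)ʲ‖û_0 − u_0‖ + bε·∑_{i=0}^{j−1} (θM)ⁱ, and consequently limsup_{j→∞} ‖û_j − u_j‖ ≤ bε/(1−θM). -/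
/-- Simplified complete-observations filter accuracy result: the uniform
contraction `‖B_j‖ ≤ θ` with `θM < 1` alone controls expansion in `Ψ`:
`‖û_j − u_j‖ ≤ (θM)ʲ‖û_0 − u_0‖ + bε ∑_{i<j} (θM)ⁱ` and
`limsup ‖û_j − u_j‖ ≤ bε/(1−θM)`. -/
theorem filter_accuracy_contractive
    {H : Type*} [NormedAddCommGroup H] [InnerProductSpace ℝ H]
    (Ψ : H → H) (M θ b ε : ℝ)
    (hM : 0 ≤ M) (hθ : 0 ≤ θ) (hb : 0 ≤ b) (hε : 0 ≤ ε) (hθM : θ * M < 1)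
    (hLip : ∀ u v : H, ‖Ψ u - Ψ v‖ ≤ M * ‖u - v‖)
    (B : ℕ → H →L[ℝ] H)
    (hBnorm : ∀ j, ‖B j‖ ≤ θ)
    (hIBnorm : ∀ j, ‖1 - B j‖ ≤ b)
    (u : ℕ → H) (hu : ∀ j, u (j + 1) = Ψ (u j))
    (ξ : ℕ → H) (hξ : ∀ j, ‖ξ j‖ ≤ ε)
    (y : ℕ → H) (hy : ∀ j, y (j + 1) = Ψ (u j) + ξ (j + 1))
    (uh : ℕ → H)
    (huh : ∀ j, uh (j + 1) = (B j) (Ψ (uh j)) + (1 - B j) (y (j + 1))) :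
    (∀ j, ‖uh j - u j‖ ≤
      (θ * M) ^ j * ‖uh 0 - u 0‖ + b * ε * ∑ i ∈ Finset.range j, (θ * M) ^ i) ∧
    Filter.limsup (fun j => ‖uh j - u j‖) Filter.atTop ≤ b * ε / (1 - θ * M) := by
  have hr0 : (0:ℝ) ≤ θ * M := mul_nonneg hθ hM
  -- one-step recursion
  have hstep : ∀ j, ‖uh (j+1) - u (j+1)‖ ≤ (θ*M) * ‖uh j - u j‖ + b * ε := by
    intro j
    have hid : uh (j+1) - u (j+1) = (B j) (Ψ (uh j) - Ψ (u j)) + (1 - B j) (ξ (j+1)) := by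
      rw [huh j, hy j, hu j, map_sub, map_add]
      have h1 : (1 - B j) (Ψ (u j)) = Ψ (u j) - (B j) (Ψ (u j)) := by
        simp [ContinuousLinearMap.sub_apply]
      rw [h1]
      abel
    calc ‖uh (j+1) - u (j+1)‖
        ≤ ‖(B j) (Ψ (uh j) - Ψ (u j))‖ + ‖(1 - B j) (ξ (j+1))‖ := by
          rw [hid]; exact norm_add_le _ _
      _ ≤ θ * (M * ‖uh j - u j‖) + b * ε := by
          gcongr
          · calc ‖(B j) (Ψ (uh j) - Ψ (u j))‖ ≤ ‖B j‖ * ‖Ψ (uh j) - Ψ (u j)‖ :=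
                (B j).le_opNorm _
              _ ≤ θ * (M * ‖uh j - u j‖) := by
                have := hLip (uh j) (u j)
                have hB := hBnorm j
                have h0 : (0:ℝ) ≤ ‖Ψ (uh j) - Ψ (u j)‖ := norm_nonneg _
                nlinarith [norm_nonneg (B j), mul_nonneg hM (norm_nonneg (uh j - u j))]
          · calc ‖(1 - B j) (ξ (j+1))‖ ≤ ‖1 - B j‖ * ‖ξ (j+1)‖ :=
                (1 - B j).le_opNorm _
              _ ≤ b * ε := by
                have := hIBnorm j
                have := hξ (j+1)
                have h0 : (0:ℝ) ≤ ‖(1 - B j : H →L[ℝ] H)‖ := norm_nonneg _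
                nlinarith [norm_nonneg (ξ (j+1))]
      _ = (θ*M) * ‖uh j - u j‖ + b * ε := by ring
  have hmain : ∀ j, ‖uh j - u j‖ ≤
      (θ * M) ^ j * ‖uh 0 - u 0‖ + b * ε * ∑ i ∈ Finset.range j, (θ * M) ^ i := by
    intro j
    induction j with
    | zero => simp
    | succ n ih =>
      have := hstep n
      have h2 : (θ*M) * ‖uh n - u n‖ ≤
          (θ*M) * ((θ * M) ^ n * ‖uh 0 - u 0‖ + b * ε * ∑ i ∈ Finset.range n, (θ * M) ^ i) :=
        mul_le_mul_of_nonneg_left ih hr0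
      rw [geom_sum_succ]
      calc ‖uh (n+1) - u (n+1)‖ ≤ (θ*M) * ‖uh n - u n‖ + b * ε := this
        _ ≤ (θ*M) * ((θ * M) ^ n * ‖uh 0 - u 0‖ + b * ε * ∑ i ∈ Finset.range n, (θ * M) ^ i)
            + b * ε := by linarith
        _ = (θ * M) ^ (n+1) * ‖uh 0 - u 0‖
            + b * ε * ((θ*M) * ∑ i ∈ Finset.range n, (θ * M) ^ i + 1) := by ring
  refine ⟨hmain, ?_⟩
  set r := θ * M with hrdef
  have h1r : 0 < 1 - r := by linarith
  -- dominating sequence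
  have hg : ∀ j, ‖uh j - u j‖ ≤ r ^ j * ‖uh 0 - u 0‖ + b * ε / (1 - r) := by
    intro j
    refine (hmain j).trans ?_
    have hsum : ∑ i ∈ Finset.range j, r ^ i ≤ (1 - r)⁻¹ :=
      sum_le_hasSum _ (fun i _ => pow_nonneg hr0 i) (hasSum_geometric_of_lt_one hr0 hθM)
    have h2 : b * ε * ∑ i ∈ Finset.range j, r ^ i ≤ b * ε * (1 - r)⁻¹ :=
      mul_le_mul_of_nonneg_left hsum (mul_nonneg hb hε)
    rw [div_eq_mul_inv]
    linarith
  have htend : Filter.Tendsto (fun j => r ^ j * ‖uh 0 - u 0‖ + b * ε / (1 - r))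
      Filter.atTop (nhds (b * ε / (1 - r))) := by
    have h0 : Filter.Tendsto (fun j : ℕ => r ^ j * ‖uh 0 - u 0‖) Filter.atTop (nhds 0) := by
      have := tendsto_pow_atTop_nhds_zero_of_lt_one hr0 hθM
      simpa using this.mul_const ‖uh 0 - u 0‖
    simpa using h0.add tendsto_const_nhds
  have hbdd : Filter.IsBoundedUnder (· ≤ ·) Filter.atTop
      (fun j => r ^ j * ‖uh 0 - u 0‖ + b * ε / (1 - r)) := htend.isBoundedUnder_le
  have hcob : Filter.IsCoboundedUnder (· ≤ ·) Filter.atTop (fun j => ‖uh j - u j‖) := by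
    apply Filter.isCoboundedUnder_le_of_le Filter.atTop (x := 0)
    intro j; exact norm_nonneg _
  calc Filter.limsup (fun j => ‖uh j - u j‖) Filter.atTop
      ≤ Filter.limsup (fun j => r ^ j * ‖uh 0 - u 0‖ + b * ε / (1 - r)) Filter.atTop :=
        Filter.limsup_le_limsup (Filter.Eventually.of_forall hg) hcob hbdd
    _ = b * ε / (1 - r) := htend.limsup_eq
end
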